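/- Let a, b, c ∈ K[t] with gcd(a,b,c) = 1, not all constant, n = max(deg a, deg b, deg c). Then μ(a,b,c) ≤ ⌊n/2⌋: there exists a nonzero syzygy of (a,b,c) of degree at most ⌊n/2⌋. -/

import Mathlib

open Polynomial
open scoped Classical

/-- The syzygy set of a triple of polynomials. -/
def Syz {K : Type*} [Field K] (a b c : K[X]) : Set (K[X] × K[X] × K[X]) :=
  {p | p.1 * a + p.2.1 * b + p.2.2 * c = 0}

/-- The degree of a triple of polynomials: the max of the (nat) degrees. -/
def triDeg {K : Type*} [Field K] (p : K[X] × K[X] × K[X]) : ℕ :=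
  max p.1.natDegree (max p.2.1.natDegree p.2.2.natDegree)

/-- The class `μ(a,b,c)`: minimal degree of a nonzero syzygy. -/
noncomputable def mu {K : Type*} [Field K] (a b c : K[X]) : ℕ :=
  sInf (Set.image triDeg {p ∈ Syz a b c | p ≠ 0})

lemma aux_finrank_degreeLT {K : Type*} [Field K] (n : ℕ) :
    Module.finrank K (degreeLT K n) = n := by
  rw [(degreeLTEquiv K n).finrank_eq]; simp

lemma aux_natDegree_le {K : Type*} [Field K] {m : ℕ} {p : K[X]}
    (hp : p ∈ degreeLT K (m + 1)) : p.natDegree ≤ m := by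
  rw [degreeLT_succ_eq_degreeLE, mem_degreeLE] at hp
  exact natDegree_le_iff_degree_le.2 hp

lemma aux_mul_mem {K : Type*} [Field K] {m n : ℕ} {p q : K[X]}
    (hp : p ∈ degreeLT K (m + 1)) (hq : q.natDegree ≤ n) :
    p * q ∈ degreeLT K (n + m + 1) := by
  rw [mem_degreeLT]
  rcases eq_or_ne (p * q) 0 with h | h
  · rw [h, degree_zero]; exact WithBot.bot_lt_coe _
  have hp0 : p ≠ 0 := left_ne_zero_of_mul h
  have hq0 : q ≠ 0 := right_ne_zero_of_mul h
  rw [degree_eq_natDegree h, Nat.cast_lt, natDegree_mul hp0 hq0]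
  have h1 : p.natDegree ≤ m := aux_natDegree_le hp
  omega

theorem stmt18 {K : Type*} [Field K] (a b c : K[X])
    (hgcd : gcd a (gcd b c) = 1)
    (hnc : ¬(a.natDegree = 0 ∧ b.natDegree = 0 ∧ c.natDegree = 0)) :
    mu a b c ≤ triDeg (a, b, c) / 2 ∧
    ∃ p ∈ Syz a b c, p ≠ 0 ∧ triDeg p ≤ triDeg (a, b, c) / 2 := by
  classical
  set n : ℕ := triDeg (a, b, c) with hn
  set m : ℕ := n / 2 with hm
  have ha : a.natDegree ≤ n := le_max_left _ _
  have hb : b.natDegree ≤ n := le_trans (le_max_left _ _) (le_max_right _ _)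
  have hc : c.natDegree ≤ n := le_trans (le_max_right _ _) (le_max_right _ _)
  set M : Submodule K K[X] := degreeLT K (m + 1) with hM
  haveI : Module.Finite K M := Module.Finite.equiv (degreeLTEquiv K (m + 1)).symm
  haveI : Module.Finite K (degreeLT K (n + m + 1)) :=
    Module.Finite.equiv (degreeLTEquiv K (n + m + 1)).symm
  let φ : (M × M × M) →ₗ[K] degreeLT K (n + m + 1) :=
    { toFun := fun x => ⟨(x.1 : K[X]) * a + (x.2.1 : K[X]) * b + (x.2.2 : K[X]) * c,
        Submodule.add_mem _ (Submodule.add_mem _ (aux_mul_mem x.1.2 ha)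
          (aux_mul_mem x.2.1.2 hb)) (aux_mul_mem x.2.2.2 hc)⟩
      map_add' := fun x y => by
        ext
        simp only [Submodule.coe_add, Prod.fst_add, Prod.snd_add]
        ring
      map_smul' := fun r x => by
        ext
        simp only [Submodule.coe_smul, Prod.smul_fst, Prod.smul_snd, RingHom.id_apply,
          smul_add, smul_mul_assoc] }
  have hfr : Module.finrank K (degreeLT K (n + m + 1)) < Module.finrank K (M × M × M) := by
    rw [Module.finrank_prod, Module.finrank_prod, hM, aux_finrank_degreeLT,
      aux_finrank_degreeLT]
    omega
  have hni : ¬ Function.Injective φ := fun h => by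
    have := LinearMap.finrank_le_finrank_of_injective h
    omega
  rw [Function.not_injective_iff] at hni
  obtain ⟨x, y, hxy, hne⟩ := hni
  have hxy' : (x.1 : K[X]) * a + (x.2.1 : K[X]) * b + (x.2.2 : K[X]) * c
      = (y.1 : K[X]) * a + (y.2.1 : K[X]) * b + (y.2.2 : K[X]) * c :=
    congrArg Subtype.val hxy
  set p : K[X] × K[X] × K[X] :=
    ((x.1 : K[X]) - (y.1 : K[X]), (x.2.1 : K[X]) - (y.2.1 : K[X]),
      (x.2.2 : K[X]) - (y.2.2 : K[X])) with hp
  have hsyz : p ∈ Syz a b c := by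
    simp only [Syz, Set.mem_setOf_eq, hp]
    linear_combination hxy'
  have hpne : p ≠ 0 := by
    intro h
    apply hne
    rw [Prod.ext_iff, Prod.ext_iff] at h
    simp only [hp, Prod.fst_zero, Prod.snd_zero, sub_eq_zero] at h
    obtain ⟨h1, h2, h3⟩ := h
    exact Prod.ext (Subtype.ext h1) (Prod.ext (Subtype.ext h2) (Subtype.ext h3))
  have hdeg : triDeg p ≤ m := by
    have h1 := aux_natDegree_le (Submodule.sub_mem _ x.1.2 y.1.2)
    have h2 := aux_natDegree_le (Submodule.sub_mem _ x.2.1.2 y.2.1.2)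
    have h3 := aux_natDegree_le (Submodule.sub_mem _ x.2.2.2 y.2.2.2)
    simp only [triDeg, hp]
    omega
  have hmu : mu a b c ≤ m := le_trans
    (Nat.sInf_le ⟨p, ⟨hsyz, hpne⟩, rfl⟩) hdeg
  exact ⟨hmu, p, hsyz, hpne, hdeg⟩
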